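/- Let (X,d) be a compact metric space, let φ_1, …, φ_n : X² → X be continuous maps each of which is an (a_1,a_2)-contraction with a_1, a_2 ≥ 0 and a_1 + a_2 < 1, and let q_1,…,q_n > 0 with Σ_j q_j = 1. Let ν, ν' be Borel probability measures on X, and suppose μ and μ' are Borel probability measures on X satisfying, for every continuous f : X → ℝ, ∫_X f dμ = ∫_X ∫_X Σ_j q_j f(φ_j(x,b)) dν(b) dμ(x) and ∫_X f dμ' = ∫_X ∫_X Σ_j q_j f(φ_j(x,b)) dν'(b) dμ'(x) (i.e. μ and μ' are fixed points of the Markov operators of the IIFS with probabilities induced by ν and ν' respectively). Then d_MK(μ, μ') ≤ (a_2/(1 − a_1)) · d_MK(ν, ν'). -/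
import Mathlib


open MeasureTheory Filter

/-- The Monge-Kantorovich distance between two Borel measures: supremum of
`|∫ f dμ - ∫ f dν|` over all 1-Lipschitz functions `f : X → ℝ`. -/
noncomputable def dMK {X : Type*} [MetricSpace X] [MeasurableSpace X]
    (μ ν : Measure X) : ℝ :=
  ⨆ f : {f : X → ℝ // LipschitzWith 1 f}, |∫ x, f.1 x ∂μ - ∫ x, f.1 x ∂ν|

section aux
variable {X : Type*} [MetricSpace X] [CompactSpace X] [MeasurableSpace X] [BorelSpace X]

lemma cont_integrable (μ : Measure X) [IsFiniteMeasure μ] {f : X → ℝ} (hf : Continuous f) :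
    Integrable f μ :=
  hf.integrable_of_hasCompactSupport (HasCompactSupport.of_compactSpace f)

lemma nonempty_of_prob (μ : Measure X) [IsProbabilityMeasure μ] : Nonempty X := by
  by_contra h
  rw [not_nonempty_iff] at h
  have h1 : μ Set.univ = 1 := measure_univ
  rw [Set.univ_eq_empty_iff.mpr h, measure_empty] at h1
  exact zero_ne_one h1

lemma dMK_bddAbove (μ ν : Measure X) [IsProbabilityMeasure μ] [IsProbabilityMeasure ν] :
    BddAbove (Set.range fun f : {f : X → ℝ // LipschitzWith 1 f} =>
      |∫ x, f.1 x ∂μ - ∫ x, f.1 x ∂ν|) := by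
  have : Nonempty X := nonempty_of_prob μ
  obtain ⟨x₀⟩ := this
  refine ⟨2 * Metric.diam (Set.univ : Set X), ?_⟩
  rintro r ⟨⟨f, hf⟩, rfl⟩
  have hfc : Continuous f := hf.continuous
  have hptb : ∀ x : X, ‖f x - f x₀‖ ≤ Metric.diam (Set.univ : Set X) := by
    intro x
    have h1 : dist (f x) (f x₀) ≤ dist x x₀ := by
      simpa using hf.dist_le_mul x x₀
    have h2 : dist x x₀ ≤ Metric.diam (Set.univ : Set X) :=
      Metric.dist_le_diam_of_mem (isCompact_univ.isBounded) trivial trivial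
    calc ‖f x - f x₀‖ = dist (f x) (f x₀) := by rw [Real.dist_eq]; rfl
      _ ≤ _ := le_trans h1 h2
  have key : ∀ (κ : Measure X), IsProbabilityMeasure κ →
      ‖∫ x, (f x - f x₀) ∂κ‖ ≤ Metric.diam (Set.univ : Set X) := by
    intro κ hκ
    have := norm_integral_le_of_norm_le_const (μ := κ) (f := fun x => f x - f x₀)
      (C := Metric.diam (Set.univ : Set X)) (Filter.Eventually.of_forall hptb)
    simpa using this
  have hint : ∀ (κ : Measure X), IsProbabilityMeasure κ →
      ∫ x, f x ∂κ - f x₀ = ∫ x, (f x - f x₀) ∂κ := by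
    intro κ hκ
    rw [integral_sub (cont_integrable κ hfc) (integrable_const _)]
    simp
  have e : ∫ x, f x ∂μ - ∫ x, f x ∂ν =
      (∫ x, (f x - f x₀) ∂μ) - ∫ x, (f x - f x₀) ∂ν := by
    rw [← hint μ inferInstance, ← hint ν inferInstance]; ring
  calc |∫ x, f x ∂μ - ∫ x, f x ∂ν|
      ≤ ‖∫ x, (f x - f x₀) ∂μ‖ + ‖∫ x, (f x - f x₀) ∂ν‖ := by
        rw [e]; exact abs_sub _ _
    _ ≤ _ := by
        have := key μ inferInstance
        have := key ν inferInstance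
        linarith

lemma abs_integral_sub_le_mul_dMK (μ ν : Measure X) [IsProbabilityMeasure μ]
    [IsProbabilityMeasure ν] {c : NNReal} {g : X → ℝ} (hg : LipschitzWith c g) :
    |∫ x, g x ∂μ - ∫ x, g x ∂ν| ≤ (c : ℝ) * dMK μ ν := by
  have : Nonempty X := nonempty_of_prob μ
  obtain ⟨x₀⟩ := this
  rcases eq_or_ne c 0 with hc | hc
  · subst hc
    have hconst : ∀ x, g x = g x₀ := by
      intro x
      have := hg.dist_le_mul x x₀
      simp at this
      exact (dist_le_zero.mp (by simpa using this))
    have : (fun x => g x) = fun _ => g x₀ := funext hconst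
    rw [this]
    simp
  · have hcpos : (0 : ℝ) < c := by positivity
    set g' : X → ℝ := fun x => (c : ℝ)⁻¹ * g x with hg'
    have hlip : LipschitzWith 1 g' := by
      apply LipschitzWith.of_dist_le_mul
      intro x y
      have h1 : dist (g x) (g y) ≤ (c : ℝ) * dist x y := hg.dist_le_mul x y
      have : dist (g' x) (g' y) = (c : ℝ)⁻¹ * dist (g x) (g y) := by
        simp only [hg', Real.dist_eq]
        rw [← mul_sub, abs_mul, abs_of_nonneg (by positivity)]
      rw [this]
      have : (c : ℝ)⁻¹ * dist (g x) (g y) ≤ dist x y := by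
        calc (c : ℝ)⁻¹ * dist (g x) (g y) ≤ (c : ℝ)⁻¹ * ((c : ℝ) * dist x y) :=
              mul_le_mul_of_nonneg_left h1 (by positivity)
          _ = dist x y := by field_simp
      simpa using this
      
    have key : |∫ x, g' x ∂μ - ∫ x, g' x ∂ν| ≤ dMK μ ν := by
      have := le_ciSup (dMK_bddAbove μ ν) (⟨g', hlip⟩ : {f : X → ℝ // LipschitzWith 1 f})
      simpa [dMK] using this
    have e : ∫ x, g' x ∂μ - ∫ x, g' x ∂ν = (c : ℝ)⁻¹ * (∫ x, g x ∂μ - ∫ x, g x ∂ν) := by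
      simp only [hg']
      rw [integral_const_mul, integral_const_mul, mul_sub]
    rw [e, abs_mul, abs_of_nonneg (by positivity : (0:ℝ) ≤ (c:ℝ)⁻¹)] at key
    calc |∫ x, g x ∂μ - ∫ x, g x ∂ν|
        = (c : ℝ) * ((c : ℝ)⁻¹ * |∫ x, g x ∂μ - ∫ x, g x ∂ν|) := by field_simp
      _ ≤ (c : ℝ) * dMK μ ν := mul_le_mul_of_nonneg_left key (le_of_lt hcpos)

end aux

/-- For a GIFSp of order 2 consisting of `(a_1, a_2)`-contractions with
`a_1 + a_2 < 1` on a compact metric space, if `μ` and `μ'` are fixed points of the Markov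
operators of the IIFSp induced by `ν` and `ν'` respectively, then
`d_MK(μ, μ') ≤ (a_2 / (1 - a_1)) · d_MK(ν, ν')`. -/
theorem stmt16 {X : Type*} [MetricSpace X] [CompactSpace X] [MeasurableSpace X] [BorelSpace X]
    (n : ℕ) (hn : 1 ≤ n)
    (φ : Fin n → X × X → X) (hφc : ∀ j, Continuous (φ j))
    (a₁ a₂ : ℝ) (ha₁ : 0 ≤ a₁) (ha₂ : 0 ≤ a₂) (hsum : a₁ + a₂ < 1)
    (hcontr : ∀ j (x x' y y' : X),
      dist (φ j (x, y)) (φ j (x', y')) ≤ a₁ * dist x x' + a₂ * dist y y')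
    (q : Fin n → ℝ) (hq : ∀ j, 0 < q j) (hq1 : ∑ j, q j = 1)
    (ν ν' μ μ' : Measure X)
    [IsProbabilityMeasure ν] [IsProbabilityMeasure ν']
    [IsProbabilityMeasure μ] [IsProbabilityMeasure μ']
    (hμ : ∀ f : X → ℝ, Continuous f →
      ∫ x, f x ∂μ = ∫ x, (∫ b, (∑ j, q j * f (φ j (x, b))) ∂ν) ∂μ)
    (hμ' : ∀ f : X → ℝ, Continuous f →
      ∫ x, f x ∂μ' = ∫ x, (∫ b, (∑ j, q j * f (φ j (x, b))) ∂ν') ∂μ') :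
    dMK μ μ' ≤ a₂ / (1 - a₁) * dMK ν ν' := by
  have hD : 0 ≤ dMK μ μ' := Real.iSup_nonneg fun f => abs_nonneg _
  have hE : 0 ≤ dMK ν ν' := Real.iSup_nonneg fun f => abs_nonneg _
  have h1a : 0 < 1 - a₁ := by linarith
  have key : dMK μ μ' ≤ a₁ * dMK μ μ' + a₂ * dMK ν ν' := by
    have hne : Nonempty {f : X → ℝ // LipschitzWith 1 f} :=
      ⟨⟨fun _ => (0 : ℝ), (LipschitzWith.const (0 : ℝ)).weaken zero_le_one⟩⟩
    refine ciSup_le ?_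
    rintro ⟨f, hf⟩
    show |∫ x, f x ∂μ - ∫ x, f x ∂μ'| ≤ a₁ * dMK μ μ' + a₂ * dMK ν ν'
    have hfc : Continuous f := hf.continuous
    set h : X → X → ℝ := fun x b => ∑ j, q j * f (φ j (x, b)) with hh
    -- pointwise bound
    have hpt : ∀ x x' b b', |h x b - h x' b'| ≤ a₁ * dist x x' + a₂ * dist b b' := by
      intro x x' b b'
      have e : h x b - h x' b' = ∑ j, q j * (f (φ j (x, b)) - f (φ j (x', b'))) := by
        simp [hh, mul_sub, Finset.sum_sub_distrib]
      rw [e]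
      calc |∑ j, q j * (f (φ j (x, b)) - f (φ j (x', b')))|
          ≤ ∑ j, |q j * (f (φ j (x, b)) - f (φ j (x', b')))| :=
            Finset.abs_sum_le_sum_abs _ _
        _ ≤ ∑ j, q j * (a₁ * dist x x' + a₂ * dist b b') := by
            apply Finset.sum_le_sum
            intro j _
            rw [abs_mul, abs_of_pos (hq j)]
            refine mul_le_mul_of_nonneg_left ?_ (hq j).le
            have h1 : |f (φ j (x, b)) - f (φ j (x', b'))| ≤
                dist (φ j (x, b)) (φ j (x', b')) := by
              have := hf.dist_le_mul (φ j (x, b)) (φ j (x', b'))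
              simpa [Real.dist_eq] using this
            exact h1.trans (hcontr j x x' b b')
        _ = a₁ * dist x x' + a₂ * dist b b' := by
            rw [← Finset.sum_mul, hq1, one_mul]
    have hlip_hx : ∀ x, LipschitzWith a₂.toNNReal (h x) := by
      intro x
      apply LipschitzWith.of_dist_le_mul
      intro b b'
      have := hpt x x b b'
      rw [Real.dist_eq]
      simpa [Real.coe_toNNReal a₂ ha₂] using this
    have hint_ν : ∀ x, Integrable (h x) ν := fun x =>
      cont_integrable ν (hlip_hx x).continuous
    have hint_ν' : ∀ x, Integrable (h x) ν' := fun x =>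
      cont_integrable ν' (hlip_hx x).continuous
    set g : X → ℝ := fun x => ∫ b, h x b ∂ν with hg
    set g' : X → ℝ := fun x => ∫ b, h x b ∂ν' with hg'
    have hlip_int : ∀ (κ : Measure X), IsProbabilityMeasure κ →
        (∀ x, Integrable (h x) κ) →
        LipschitzWith a₁.toNNReal (fun x => ∫ b, h x b ∂κ) := by
      intro κ hκ hint
      apply LipschitzWith.of_dist_le_mul
      intro x x'
      rw [Real.dist_eq, ← integral_sub (hint x) (hint x')]
      have hb : ∀ b, ‖h x b - h x' b‖ ≤ a₁ * dist x x' := by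
        intro b
        have := hpt x x' b b
        simpa using this
      have := norm_integral_le_of_norm_le_const (μ := κ)
        (f := fun b => h x b - h x' b) (C := a₁ * dist x x')
        (Eventually.of_forall hb)
      simpa [Real.coe_toNNReal a₁ ha₁] using this
    have hlip_g : LipschitzWith a₁.toNNReal g := hlip_int ν inferInstance hint_ν
    have hlip_g' : LipschitzWith a₁.toNNReal g' := hlip_int ν' inferInstance hint_ν'
    have hintg : Integrable g μ' := cont_integrable μ' hlip_g.continuous
    have hintg' : Integrable g' μ' := cont_integrable μ' hlip_g'.continuous
    -- Part A
    have hA : |∫ x, g x ∂μ - ∫ x, g x ∂μ'| ≤ a₁ * dMK μ μ' := by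
      have := abs_integral_sub_le_mul_dMK μ μ' hlip_g
      simpa [Real.coe_toNNReal a₁ ha₁] using this
    -- Part B
    have hBx : ∀ x, ‖g x - g' x‖ ≤ a₂ * dMK ν ν' := by
      intro x
      have := abs_integral_sub_le_mul_dMK ν ν' (hlip_hx x)
      simpa [Real.coe_toNNReal a₂ ha₂, hg, hg'] using this
    have hB : |∫ x, g x ∂μ' - ∫ x, g' x ∂μ'| ≤ a₂ * dMK ν ν' := by
      rw [← integral_sub hintg hintg']
      have := norm_integral_le_of_norm_le_const (μ := μ')
        (f := fun x => g x - g' x) (C := a₂ * dMK ν ν')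
        (Eventually.of_forall hBx)
      simpa using this
    have e : ∫ x, f x ∂μ - ∫ x, f x ∂μ' =
        (∫ x, g x ∂μ - ∫ x, g x ∂μ') + (∫ x, g x ∂μ' - ∫ x, g' x ∂μ') := by
      rw [hμ f hfc, hμ' f hfc]
      ring
    calc |∫ x, f x ∂μ - ∫ x, f x ∂μ'|
        = |(∫ x, g x ∂μ - ∫ x, g x ∂μ') + (∫ x, g x ∂μ' - ∫ x, g' x ∂μ')| := by rw [e]
      _ ≤ |∫ x, g x ∂μ - ∫ x, g x ∂μ'| + |∫ x, g x ∂μ' - ∫ x, g' x ∂μ'| := abs_add_le _ _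
      _ ≤ a₁ * dMK μ μ' + a₂ * dMK ν ν' := add_le_add hA hB
  rw [div_mul_eq_mul_div, le_div_iff₀ h1a]
  nlinarith [key]
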